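/- arXiv:2006.03378 — 3 statements merged into one kernel-verified Lean document; each statement's English description precedes it below -/
import Mathlib

section
/- Fix m ∈ ℝ and let D_{m,+} be the set of probability measures supported on some interval [m,M] with M > m. For every ν ∈ D_{m,+} with mean μ and every μ⋆ > μ, the infimum K_inf(ν, μ⋆, D_{m,+}) = inf{ KL(ν,ν') : ν' ∈ D_{m,+}, E(ν') > μ⋆ } equals 0. -/
open MeasureTheory

open Classical

/-- Kullback–Leibler divergence: `∫ ln(dν/dν') dν` when `ν ≪ ν'`, and `+∞` otherwise. -/
noncomputable def KLdiv (ν ν' : Measure ℝ) : EReal :=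
  if ν ≪ ν' then ((∫ x, Real.log ((ν.rnDeriv ν') x).toReal ∂ν : ℝ) : EReal) else ⊤

lemma KLdiv_nonneg (ν ν' : Measure ℝ) [IsProbabilityMeasure ν] [IsProbabilityMeasure ν'] :
    (0 : EReal) ≤ KLdiv ν ν' := by
  rw [KLdiv]
  split_ifs with hac
  · by_cases hint : Integrable (fun x => Real.log ((ν.rnDeriv ν') x).toReal) ν
    · have h1 : ∫⁻ x, (ν.rnDeriv ν' x)⁻¹ ∂ν ≤ 1 := by
        rw [← lintegral_rnDeriv_mul hac (f := fun x => (ν.rnDeriv ν' x)⁻¹)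
          ((Measure.measurable_rnDeriv ν ν').inv).aemeasurable]
        calc ∫⁻ x, ν.rnDeriv ν' x * (ν.rnDeriv ν' x)⁻¹ ∂ν' ≤ ∫⁻ _, 1 ∂ν' :=
              lintegral_mono fun x => ENNReal.mul_inv_le_one _
          _ = 1 := by simp
      have hg_int : Integrable (fun x => ((ν.rnDeriv ν' x)⁻¹).toReal) ν :=
        integrable_toReal_of_lintegral_ne_top
          ((Measure.measurable_rnDeriv ν ν').inv).aemeasurable
          (h1.trans_lt ENNReal.one_lt_top).ne
      have hpos := Measure.rnDeriv_pos hac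
      have hlt := hac.ae_le (Measure.rnDeriv_lt_top ν ν')
      have hae : ∀ᵐ x ∂ν,
          1 - ((ν.rnDeriv ν' x)⁻¹).toReal ≤ Real.log ((ν.rnDeriv ν') x).toReal := by
        filter_upwards [hpos, hlt] with x h0 htop
        have ht : 0 < ((ν.rnDeriv ν') x).toReal := ENNReal.toReal_pos h0.ne' htop.ne
        have h2 := Real.log_le_sub_one_of_pos (inv_pos.2 ht)
        rw [Real.log_inv] at h2
        rw [ENNReal.toReal_inv]
        linarith
      have h2 : ∫ x, (1 - ((ν.rnDeriv ν' x)⁻¹).toReal) ∂ν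
          ≤ ∫ x, Real.log ((ν.rnDeriv ν') x).toReal ∂ν :=
        integral_mono_ae ((integrable_const 1).sub hg_int) hint hae
      have h3 : ∫ x, ((ν.rnDeriv ν' x)⁻¹).toReal ∂ν ≤ 1 := by
        rw [integral_toReal (f := fun x => (ν.rnDeriv ν' x)⁻¹)
          ((Measure.measurable_rnDeriv ν ν').inv).aemeasurable
          (hpos.mono fun x hx => by simp [ENNReal.inv_lt_top, hx])]
        have := ENNReal.toReal_mono ENNReal.one_ne_top h1
        simpa using this
      rw [integral_sub (integrable_const 1) hg_int, integral_const] at h2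
      simp only [measure_univ, probReal_univ, ENNReal.toReal_one, smul_eq_mul, one_mul, mul_one] at h2
      exact EReal.coe_nonneg.2 (by linarith)
    · rw [integral_undef hint]
      simp
  · exact le_top

lemma KLdiv_mix (ν : Measure ℝ) [IsProbabilityMeasure ν] {ε : ℝ} (c : ℝ)
    (hε0 : 0 < ε) (hε1 : ε < 1) (hc : ν {c} = 0) :
    KLdiv ν (ENNReal.ofReal (1 - ε) • ν + ENNReal.ofReal ε • Measure.dirac c)
      = ((- Real.log (1 - ε) : ℝ) : EReal) := by
  set ν₂ := ENNReal.ofReal (1 - ε) • ν with hν₂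
  have h1ε : (0:ℝ) < 1 - ε := by linarith
  have hne : ENNReal.ofReal (1 - ε) ≠ 0 := ne_of_gt (ENNReal.ofReal_pos.2 h1ε)
  have hac2 : ν ≪ ν₂ := Measure.absolutelyContinuous_smul hne
  have hac : ν ≪ ν₂ + ENNReal.ofReal ε • Measure.dirac c :=
    hac2.trans (Measure.AbsolutelyContinuous.rfl.add_right _)
  haveI : IsFiniteMeasure ν₂ := by
    constructor
    rw [hν₂, Measure.smul_apply, measure_univ, smul_eq_mul, mul_one]
    exact ENNReal.ofReal_lt_top
  haveI : IsFiniteMeasure (ENNReal.ofReal ε • Measure.dirac c) := by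
    constructor
    rw [Measure.smul_apply, measure_univ, smul_eq_mul, mul_one]
    exact ENNReal.ofReal_lt_top
  have hsing : ν₂ ⟂ₘ ENNReal.ofReal ε • Measure.dirac c := by
    refine ⟨{c}, measurableSet_singleton c, ?_, ?_⟩
    · rw [hν₂, Measure.smul_apply, hc, smul_eq_mul, mul_zero]
    · rw [Measure.smul_apply, Measure.dirac_apply]
      simp
  have hrd : ν.rnDeriv (ν₂ + ENNReal.ofReal ε • Measure.dirac c)
      =ᵐ[ν] fun _ => (ENNReal.ofReal (1 - ε))⁻¹ := by
    have e1 : ν.rnDeriv (ν₂ + ENNReal.ofReal ε • Measure.dirac c) =ᵐ[ν] ν.rnDeriv ν₂ :=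
      hac2.ae_le (Measure.rnDeriv_add_right_of_mutuallySingular hsing)
    have e2 := Measure.rnDeriv_smul_right_of_ne_top ν ν hne ENNReal.ofReal_ne_top
    have e3 := Measure.rnDeriv_self ν
    refine e1.trans (e2.trans ?_)
    filter_upwards [e3] with x hx
    simp [hx]
  rw [KLdiv, if_pos hac]
  have : ∫ x, Real.log ((ν.rnDeriv (ν₂ + ENNReal.ofReal ε • Measure.dirac c)) x).toReal ∂ν
      = - Real.log (1 - ε) := by
    rw [integral_congr_ae (g := fun _ => - Real.log (1 - ε)) ?_, integral_const]
    · simp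
    · filter_upwards [hrd] with x hx
      rw [hx, ENNReal.toReal_inv, ENNReal.toReal_ofReal h1ε.le, Real.log_inv]
  rw [this]

/-- The model `D_{m,+}` of probability measures supported on some `[m, M]` with `M > m`. -/
def Dmp (m : ℝ) : Set (Measure ℝ) :=
  {ν | IsProbabilityMeasure ν ∧ ∃ M, m < M ∧ ν (Set.Icc m M)ᶜ = 0}

theorem Kinf_eq_zero (m μ μstar : ℝ) (ν : Measure ℝ)
    (hν : ν ∈ Dmp m) (hμ : μ = ∫ x, x ∂ν) (hμstar : μ < μstar) :
    sInf {d : EReal | ∃ ν' ∈ Dmp m, μstar < (∫ x, x ∂ν') ∧ d = KLdiv ν ν'} = 0 := by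
  obtain ⟨hprob, M, hM, hsupp⟩ := hν
  haveI := hprob
  set S := {d : EReal | ∃ ν' ∈ Dmp m, μstar < (∫ x, x ∂ν') ∧ d = KLdiv ν ν'} with hS
  -- integrability of the identity wrt ν
  have hae_mem : ∀ᵐ x ∂ν, x ∈ Set.Icc m M := by
    rw [ae_iff]
    convert hsupp using 2
    ext x; simp
  have hint : Integrable (fun x : ℝ => x) ν := by
    refine Integrable.mono' (integrable_const (max |m| |M|))
      measurable_id.aestronglyMeasurable ?_
    filter_upwards [hae_mem] with x hx
    rw [Real.norm_eq_abs]
    exact abs_le_max_abs_abs hx.1 hx.2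
  set Δ := μstar - μ with hΔdef
  have hΔ : 0 < Δ := by simp [hΔdef]; linarith
  -- the witness element for each ε ∈ (0,1)
  have hmem : ∀ ε : ℝ, 0 < ε → ε < 1 →
      ((- Real.log (1 - ε) : ℝ) : EReal) ∈ S := by
    intro ε hε0 hε1
    set c := max (M + 1) (μ + 2 * Δ / ε) with hcdef
    have hcM : M + 1 ≤ c := le_max_left _ _
    have hcm : m < c := by linarith [hM]
    set ν' := ENNReal.ofReal (1 - ε) • ν + ENNReal.ofReal ε • Measure.dirac c with hν'def
    have h1ε : (0:ℝ) < 1 - ε := by linarith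
    haveI hν'prob : IsProbabilityMeasure ν' := by
      constructor
      rw [hν'def, Measure.add_apply, Measure.smul_apply, Measure.smul_apply,
        measure_univ, measure_univ, smul_eq_mul, smul_eq_mul, mul_one, mul_one,
        ← ENNReal.ofReal_add h1ε.le hε0.le]
      norm_num
    have hintd : Integrable (fun x : ℝ => x) (Measure.dirac c) := by
      constructor
      · exact measurable_id.aestronglyMeasurable
      · rw [HasFiniteIntegral]
        rw [lintegral_dirac]
        exact ENNReal.coe_lt_top
    have hmean : ∫ x, x ∂ν' = (1 - ε) * μ + ε * c := by
      rw [hν'def, integral_add_measure (hint.smul_measure ENNReal.ofReal_ne_top)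
        (hintd.smul_measure ENNReal.ofReal_ne_top), integral_smul_measure,
        integral_smul_measure, integral_dirac, ENNReal.toReal_ofReal h1ε.le,
        ENNReal.toReal_ofReal hε0.le, hμ]
      simp only [smul_eq_mul]
    refine ⟨ν', ⟨hν'prob, max M c, lt_of_lt_of_le hM (le_max_left _ _), ?_⟩, ?_, ?_⟩
    · -- support
      rw [hν'def, Measure.add_apply, Measure.smul_apply, Measure.smul_apply]
      have h1 : ν (Set.Icc m (max M c))ᶜ = 0 := by
        refine measure_mono_null ?_ hsupp
        exact Set.compl_subset_compl.2 (Set.Icc_subset_Icc le_rfl (le_max_left _ _))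
      have h2 : Measure.dirac c (Set.Icc m (max M c))ᶜ = 0 := by
        rw [Measure.dirac_apply]
        simp only [Set.indicator_apply_eq_zero]
        intro hcmem
        exact absurd ⟨hcm.le, le_max_right _ _⟩ hcmem
      rw [h1, h2]
      simp
    · -- mean bound
      rw [hmean]
      have hc2 : μ + 2 * Δ / ε ≤ c := le_max_right _ _
      have : ε * (μ + 2 * Δ / ε) ≤ ε * c := mul_le_mul_of_nonneg_left hc2 hε0.le
      have he : ε * (μ + 2 * Δ / ε) = ε * μ + 2 * Δ := by
        field_simp
      rw [he] at this
      have hexp : (1 - ε) * μ = μ - ε * μ := by ring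
      rw [hΔdef] at this
      linarith
    · -- KL value
      rw [hν'def]
      refine (KLdiv_mix ν c hε0 hε1 ?_).symm
      refine measure_mono_null ?_ hsupp
      intro x hx
      rw [Set.mem_singleton_iff] at hx
      subst hx
      intro hmem
      exact absurd hmem.2 (by linarith)
  -- conclude
  refine le_antisymm ?_ ?_
  · -- sInf S ≤ 0 via tendsto
    have htends : Filter.Tendsto
        (fun n : ℕ => ((- Real.log (1 - 1 / ((n : ℝ) + 2)) : ℝ) : EReal))
        Filter.atTop (nhds (0 : EReal)) := by
      rw [show (0 : EReal) = ((0 : ℝ) : EReal) from rfl]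
      rw [EReal.tendsto_coe]
      have h0 : Filter.Tendsto (fun n : ℕ => (n : ℝ) + 2) Filter.atTop Filter.atTop :=
        Filter.tendsto_atTop_add_const_right _ 2 tendsto_natCast_atTop_atTop
      have h1 : Filter.Tendsto (fun n : ℕ => 1 / ((n : ℝ) + 2)) Filter.atTop (nhds 0) := by
        simpa [one_div, Pi.inv_def] using h0.inv_tendsto_atTop
      have h2 : Filter.Tendsto (fun n : ℕ => 1 - 1 / ((n : ℝ) + 2)) Filter.atTop (nhds 1) := by
        simpa using (tendsto_const_nhds.sub h1)
      have h3 := (h2.log one_ne_zero).neg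
      simpa using h3
    apply ge_of_tendsto' htends
    intro n
    have hn0 : (0:ℝ) < 1 / ((n : ℝ) + 2) := by positivity
    have hn1 : 1 / ((n : ℝ) + 2) < 1 := by
      rw [div_lt_one (by positivity)]
      linarith [Nat.cast_nonneg (α := ℝ) n]
    exact sInf_le (hmem _ hn0 hn1)
  · refine le_sInf fun d hd => ?_
    obtain ⟨ν', hν'mem, _, rfl⟩ := hd
    haveI := hν'mem.1
    exact KLdiv_nonneg ν ν'
end

section
/- Fix M ∈ ℝ and m ≤ M. Denote by D_{m,M} the probability measures supported on [m,M] and by D_{-∞,M} the probability measures supported on (-∞,M] with finite first moment. For every ν ∈ D_{m,M} and every μ > E(ν), the quantities K_inf(ν, μ, D_{m,M}) and K_inf(ν, μ, D_{-∞,M}) are equal, where K_inf(ν, x, D) = inf{ KL(ν,ν') : ν' ∈ D, E(ν') > x }. -/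
open MeasureTheory

open Classical

open ENNReal

/-- The model `D_{m,M}` of probability measures supported on `[m, M]`. -/
def DmM (m M : ℝ) : Set (Measure ℝ) :=
  {ν | IsProbabilityMeasure ν ∧ ν (Set.Icc m M)ᶜ = 0}

/-- The model `D_{-∞,M}` of probability measures supported on `(-∞, M]`
with a finite first moment. -/
def DinfM (M : ℝ) : Set (Measure ℝ) :=
  {ν | IsProbabilityMeasure ν ∧ ν (Set.Iic M)ᶜ = 0 ∧ Integrable (fun x : ℝ => x) ν}


/-- Integrability only depends on the part strictly above `m` plus the point `m`,
when `ν (Iio m) = 0`. -/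
lemma integrable_iff_indicator_Ioi (m : ℝ) (ν : Measure ℝ) [IsFiniteMeasure ν]
    (hν : ν (Set.Iio m) = 0) {χ : ℝ → ℝ} (hχ : Measurable χ) :
    Integrable χ ν ↔ Integrable ((Set.Ioi m).indicator χ) ν := by
  have hae : χ =ᵐ[ν] (Set.Ici m).indicator χ := by
    refine (ae_iff).2 (measure_mono_null ?_ hν)
    intro x hx
    simp only [Set.mem_setOf_eq] at hx
    by_contra h
    exact hx (Set.indicator_of_mem (Set.mem_Ici.2 (not_lt.1 h)) χ).symm
  have hdecomp : (Set.Ici m).indicator χ =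
      (Set.Ioi m).indicator χ + ({m} : Set ℝ).indicator χ := by
    funext x
    rw [← Set.Ioi_union_left, Set.indicator_union_of_disjoint (by simp) χ]
    rfl
  have hsing : Integrable (({m} : Set ℝ).indicator χ) ν := by
    rw [integrable_indicator_iff (measurableSet_singleton m)]
    exact (integrableOn_singleton_iff (f := χ) (x := m)).2 (Or.inr (measure_lt_top ν _))
  rw [integrable_congr hae, hdecomp]
  constructor
  · intro h
    have := h.sub hsing
    simpa using this
  · intro h
    exact h.add hsing

lemma KLdiv_map_max_le (m M : ℝ) (ν ν' : Measure ℝ)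
    [IsProbabilityMeasure ν] [IsProbabilityMeasure ν']
    (hν : ν (Set.Icc m M)ᶜ = 0) (hac : ν ≪ ν') :
    KLdiv ν (Measure.map (fun x => max x m) ν') ≤ KLdiv ν ν' := by
  set f : ℝ → ℝ := fun x => max x m with hf_def
  have hf : Measurable f := measurable_id.max measurable_const
  set ν'' : Measure ℝ := Measure.map f ν' with hν''_def
  haveI : IsProbabilityMeasure ν'' := Measure.isProbabilityMeasure_map hf.aemeasurable
  set g : ℝ → ℝ≥0∞ := ν.rnDeriv ν' with hg_def
  set r : ℝ → ℝ≥0∞ := ν.rnDeriv ν'' with hr_def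
  have hg_meas : Measurable g := Measure.measurable_rnDeriv ν ν'
  have hr_meas : Measurable r := Measure.measurable_rnDeriv ν ν''
  have hνIio : ν (Set.Iio m) = 0 := by
    refine measure_mono_null (fun x hx => ?_) hν
    simp only [Set.mem_compl_iff, Set.mem_Icc, not_and_or, not_le]
    exact Or.inl hx
  -- ν s = ν (s ∩ Ici m)
  have hν_inter : ∀ s : Set ℝ, ν s = ν (s ∩ Set.Ici m) := by
    intro s
    refine le_antisymm ?_ (measure_mono Set.inter_subset_left)
    calc ν s ≤ ν (s ∩ Set.Ici m ∪ Set.Iio m) := by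
          refine measure_mono (fun x hx => ?_)
          by_cases h : m ≤ x
          · exact Or.inl ⟨hx, h⟩
          · exact Or.inr (not_le.1 h)
      _ ≤ ν (s ∩ Set.Ici m) + ν (Set.Iio m) := measure_union_le _ _
      _ = ν (s ∩ Set.Ici m) := by rw [hνIio, add_zero]
  -- Step A : ν ≤ ν''.withDensity g
  have hle : ν ≤ ν''.withDensity g := by
    refine Measure.le_iff.2 (fun s hs => ?_)
    rw [withDensity_apply _ hs, hν''_def,
      setLIntegral_map hs hg_meas hf]
    calc ν s = ν (s ∩ Set.Ici m) := hν_inter s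
      _ = ∫⁻ x in s ∩ Set.Ici m, g x ∂ν' := by
          rw [← withDensity_apply _ (hs.inter measurableSet_Ici),
            Measure.withDensity_rnDeriv_eq _ _ hac]
      _ = ∫⁻ x in s ∩ Set.Ici m, g (f x) ∂ν' := by
          refine setLIntegral_congr_fun (hs.inter measurableSet_Ici)
            (fun x hx => ?_)
          rw [hf_def]
          simp only [max_eq_left (Set.mem_Ici.1 hx.2)]
      _ ≤ ∫⁻ x in f ⁻¹' s, g (f x) ∂ν' := by
          refine lintegral_mono_set (fun x hx => ?_)
          have : f x = x := max_eq_left hx.2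
          simpa [Set.mem_preimage, this] using hx.1
  -- Step B : ν ≪ ν''
  have hac'' : ν ≪ ν'' :=
    (Measure.absolutelyContinuous_of_le hle).trans (withDensity_absolutelyContinuous _ _)
  -- Step C : r ≤ g a.e. ν
  have hrg : r ≤ᵐ[ν''] g := by
    refine ae_le_of_forall_setLIntegral_le_of_sigmaFinite hr_meas (fun s hs _ => ?_)
    calc ∫⁻ x in s, r x ∂ν'' ≤ ν s := Measure.setLIntegral_rnDeriv_le s
      _ ≤ (ν''.withDensity g) s := Measure.le_iff'.1 hle s
      _ = ∫⁻ x in s, g x ∂ν'' := withDensity_apply _ hs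
  have hrg' : ∀ᵐ x ∂ν, r x ≤ g x := hac''.ae_le hrg
  -- Step D : positivity and finiteness
  have hrpos : ∀ᵐ x ∂ν, 0 < r x := Measure.rnDeriv_pos hac''
  have hgtop : ∀ᵐ x ∂ν, g x ≠ ⊤ := hac.ae_le (Measure.rnDeriv_ne_top _ _)
  -- Step E : pointwise comparison of logs
  set φ : ℝ → ℝ := fun x => Real.log (r x).toReal with hφ_def
  set ψ : ℝ → ℝ := fun x => Real.log (g x).toReal with hψ_def
  have hφψ : φ ≤ᵐ[ν] ψ := by
    filter_upwards [hrg', hrpos, hgtop] with x h1 h2 h3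
    have hrtop : r x ≠ ⊤ := fun h => h3 (top_le_iff.1 (h ▸ h1))
    exact Real.log_le_log (ENNReal.toReal_pos h2.ne' hrtop)
      (ENNReal.toReal_le_toReal hrtop h3 |>.2 h1)
  -- locality : ν''.restrict (Ioi m) = ν'.restrict (Ioi m)
  have hpre : f ⁻¹' Set.Ioi m = Set.Ioi m := by
    ext x
    simp [hf_def, lt_max_iff]
  have hrestr_eq : ν''.restrict (Set.Ioi m) = ν'.restrict (Set.Ioi m) := by
    rw [hν''_def, Measure.restrict_map hf measurableSet_Ioi, hpre]
    have : f =ᵐ[ν'.restrict (Set.Ioi m)] id := by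
      filter_upwards [ae_restrict_mem measurableSet_Ioi] with x hx
      exact max_eq_left (le_of_lt hx)
    rw [Measure.map_congr this, Measure.map_id]
  -- locality of rnDeriv
  have h1 : ν.restrict (Set.Ioi m) = (ν'.restrict (Set.Ioi m)).withDensity g := by
    rw [← restrict_withDensity measurableSet_Ioi, Measure.withDensity_rnDeriv_eq _ _ hac]
  have h2 : ν.restrict (Set.Ioi m) = (ν'.restrict (Set.Ioi m)).withDensity r := by
    rw [← hrestr_eq, ← restrict_withDensity measurableSet_Ioi,
      Measure.withDensity_rnDeriv_eq _ _ hac'']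
  have hloc0 : g =ᵐ[ν'.restrict (Set.Ioi m)] r := by
    have e1 := Measure.rnDeriv_withDensity (ν'.restrict (Set.Ioi m)) hg_meas
    have e2 := Measure.rnDeriv_withDensity (ν'.restrict (Set.Ioi m)) hr_meas
    rw [← h1] at e1
    rw [← h2] at e2
    exact e1.symm.trans e2
  have hloc : ∀ᵐ x ∂ν, x ∈ Set.Ioi m → r x = g x := by
    have : r =ᵐ[ν.restrict (Set.Ioi m)] g := (hac.restrict _) hloc0.symm
    exact (ae_restrict_iff' measurableSet_Ioi).1 this
  -- integrability transfer
  have hφ_meas : Measurable φ := Real.measurable_log.comp hr_meas.ennreal_toReal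
  have hψ_meas : Measurable ψ := Real.measurable_log.comp hg_meas.ennreal_toReal
  have hind : (Set.Ioi m).indicator φ =ᵐ[ν] (Set.Ioi m).indicator ψ := by
    filter_upwards [hloc] with x hx
    by_cases h : x ∈ Set.Ioi m
    · rw [Set.indicator_of_mem h, Set.indicator_of_mem h, hφ_def, hψ_def]
      simp only [hx h]
    · rw [Set.indicator_of_notMem h, Set.indicator_of_notMem h]
  have hiff : Integrable φ ν ↔ Integrable ψ ν := by
    rw [integrable_iff_indicator_Ioi m ν hνIio hφ_meas,
      integrable_iff_indicator_Ioi m ν hνIio hψ_meas]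
    exact integrable_congr hind
  -- conclusion
  rw [KLdiv, KLdiv, if_pos hac, if_pos hac'']
  by_cases hint : Integrable ψ ν
  · have hφint : Integrable φ ν := hiff.2 hint
    exact_mod_cast integral_mono_ae hφint hint hφψ
  · rw [show (∫ x, Real.log ((ν.rnDeriv ν'') x).toReal ∂ν) = ∫ x, φ x ∂ν from rfl,
      show (∫ x, Real.log ((ν.rnDeriv ν') x).toReal ∂ν) = ∫ x, ψ x ∂ν from rfl,
      integral_undef hint, integral_undef (fun h => hint (hiff.1 h))]

theorem Kinf_bounded_eq_semiBounded (m M μ : ℝ) (hmM : m ≤ M)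
    (ν : Measure ℝ) (hν : ν ∈ DmM m M) (hμ : (∫ x, x ∂ν) < μ) :
    sInf {d : EReal | ∃ ν' ∈ DmM m M, μ < (∫ x, x ∂ν') ∧ d = KLdiv ν ν'} =
      sInf {d : EReal | ∃ ν' ∈ DinfM M, μ < (∫ x, x ∂ν') ∧ d = KLdiv ν ν'} := by
  obtain ⟨hνprob, hνsupp⟩ := hν
  haveI := hνprob
  refine le_antisymm ?_ ?_
  · -- LHS set ⊆ RHS set
    refine le_sInf ?_
    rintro d ⟨ν', ⟨hp', hs', hi'⟩, hm', rfl⟩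
    haveI := hp'
    by_cases hac : ν ≪ ν'
    · set f : ℝ → ℝ := fun x => max x m with hf_def
      have hf : Measurable f := measurable_id.max measurable_const
      refine le_trans (sInf_le ?_) (KLdiv_map_max_le m M ν ν' hνsupp hac)
      refine ⟨Measure.map f ν', ⟨Measure.isProbabilityMeasure_map hf.aemeasurable, ?_⟩, ?_, rfl⟩
      · rw [Measure.map_apply hf (measurableSet_Icc.compl)]
        refine measure_mono_null (fun x hx => ?_) hs'
        simp only [Set.mem_preimage, Set.mem_compl_iff, Set.mem_Icc, not_and_or, not_le] at hx
        simp only [Set.mem_compl_iff, Set.mem_Iic, not_le]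
        rcases hx with h | h
        · exact absurd (le_max_right x m) (not_le.2 h)
        · exact lt_of_not_ge fun hxM => absurd h (not_lt.2 (max_le hxM hmM))
      · rw [show (∫ x, x ∂Measure.map f ν') = ∫ x, f x ∂ν' from
          integral_map hf.aemeasurable aestronglyMeasurable_id]
        have hint : Integrable f ν' := by
          exact hi'.sup (integrable_const m)
        exact lt_of_lt_of_le hm'
          (integral_mono_ae hi' hint (Filter.Eventually.of_forall fun x => le_max_left x m))
    · rw [show KLdiv ν ν' = ⊤ from if_neg hac]
      exact le_top
  · -- RHS ≤ LHS since DmM ⊆ DinfM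
    refine sInf_le_sInf ?_
    rintro d ⟨ν', ⟨hp', hs'⟩, hm', rfl⟩
    haveI := hp'
    refine ⟨ν', ⟨hp', measure_mono_null (Set.compl_subset_compl.2 (Set.Icc_subset_Iic_self)) hs', ?_⟩, hm', rfl⟩
    have hbd : ∀ᵐ x ∂ν', x ∈ Set.Icc m M := by
      rw [ae_iff]
      refine measure_mono_null (fun x hx => ?_) hs'
      simpa using hx
    refine (integrable_const (max |m| |M|)).mono' measurable_id.aestronglyMeasurable ?_
    filter_upwards [hbd] with x hx
    rw [Real.norm_eq_abs, abs_le]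
    constructor
    · calc -(max |m| |M|) ≤ -|m| := neg_le_neg (le_max_left _ _)
        _ ≤ m := neg_abs_le m
        _ ≤ x := hx.1
    · calc x ≤ M := hx.2
        _ ≤ |M| := le_abs_self M
        _ ≤ max |m| |M| := le_max_right _ _
end

section
/- Let K ≥ 1, M ∈ ℝ, y ∈ (-∞, M], p ∈ (0,1], and η ∈ (0,∞). Define the estimated payoff ŷ = (y - M)/p + M and the mixability gap δ = -(p·ŷ + (1-p)·M) + η^{-1} ln((1-p)·e^{ηM} + p·e^{ηŷ}). Then δ ≤ η·(M - y)²/(2p). -/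
lemma exp_neg_le_quadratic (x : ℝ) (hx : 0 ≤ x) :
    Real.exp (-x) ≤ 1 - x + x ^ 2 / 2 := by
  have hmono : Monotone (fun t : ℝ => (1 - t + t ^ 2 / 2) * Real.exp t) := by
    have hd : ∀ t : ℝ, HasDerivAt (fun t : ℝ => (1 - t + t ^ 2 / 2) * Real.exp t)
        (t ^ 2 / 2 * Real.exp t) t := by
      intro t
      have h1 : HasDerivAt (fun t : ℝ => 1 - t + t ^ 2 / 2) (-1 + t) t := by
        have := (((hasDerivAt_id t).const_sub 1).add
          (((hasDerivAt_id t).pow 2).div_const 2))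
        refine this.congr_deriv ?_
        simp
      have := h1.mul (Real.hasDerivAt_exp t)
      refine this.congr_deriv ?_
      ring
    have : ∀ t : ℝ, 0 ≤ t ^ 2 / 2 * Real.exp t := fun t => by positivity
    exact monotone_of_deriv_nonneg (fun t => (hd t).differentiableAt) fun t => by
      rw [(hd t).deriv]; exact this t
  have h01 : (1 : ℝ) ≤ (1 - x + x ^ 2 / 2) * Real.exp x := by
    have := hmono hx
    simpa using this
  have hex : 0 < Real.exp x := Real.exp_pos x
  rw [Real.exp_neg]
  rw [inv_le_iff_one_le_mul₀ hex]
  linarith [h01]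

theorem mixability_gap_sq_bound (K : ℕ) (hK : 1 ≤ K) (M y p η : ℝ)
    (hy : y ≤ M) (hp : p ∈ Set.Ioc (0:ℝ) 1) (hη : 0 < η) :
    let yhat := ((y - M) / p + M);
    -(p * yhat + (1 - p) * M) +
        η⁻¹ * Real.log ((1 - p) * Real.exp (η * M) + p * Real.exp (η * yhat)) ≤
      η * (M - y) ^ 2 / (2 * p) := by
  intro yhat
  obtain ⟨hp0, hp1⟩ := hp
  have hMy : 0 ≤ M - y := by linarith
  set x := η * (M - y) / p with hxdef
  have hx0 : 0 ≤ x := by positivity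
  have hyhat : p * yhat + (1 - p) * M = y := by
    show p * ((y - M) / p + M) + (1 - p) * M = y
    field_simp
    ring
  have hηyhat : η * yhat = η * M - x := by
    show η * ((y - M) / p + M) = η * M - η * (M - y) / p
    field_simp
    ring
  have hexp : Real.exp (η * yhat) = Real.exp (η * M) * Real.exp (-x) := by
    rw [hηyhat, ← Real.exp_add]
    ring_nf
  have hinner_pos : 0 < (1 - p) + p * Real.exp (-x) := by
    have := Real.exp_pos (-x)
    nlinarith
  have hS : (1 - p) * Real.exp (η * M) + p * Real.exp (η * yhat)
      = Real.exp (η * M) * ((1 - p) + p * Real.exp (-x)) := by rw [hexp]; ring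
  have hlog : Real.log ((1 - p) * Real.exp (η * M) + p * Real.exp (η * yhat))
      = η * M + Real.log ((1 - p) + p * Real.exp (-x)) := by
    rw [hS, Real.log_mul (Real.exp_ne_zero _) (ne_of_gt hinner_pos), Real.log_exp]
  have hexpb : Real.exp (-x) ≤ 1 - x + x ^ 2 / 2 := exp_neg_le_quadratic x hx0
  have hlogle : Real.log ((1 - p) + p * Real.exp (-x)) ≤ p * (-x + x ^ 2 / 2) := by
    calc Real.log ((1 - p) + p * Real.exp (-x))
        ≤ (1 - p) + p * Real.exp (-x) - 1 := Real.log_le_sub_one_of_pos hinner_pos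
      _ ≤ p * (-x + x ^ 2 / 2) := by nlinarith
  rw [hlog, hyhat]
  have hfinal : -y + η⁻¹ * (η * M + p * (-x + x ^ 2 / 2)) = η * (M - y) ^ 2 / (2 * p) := by
    rw [hxdef]
    field_simp
    ring
  have hmul : η⁻¹ * (η * M + Real.log ((1 - p) + p * Real.exp (-x)))
      ≤ η⁻¹ * (η * M + p * (-x + x ^ 2 / 2)) := by
    apply mul_le_mul_of_nonneg_left _ (le_of_lt (inv_pos.mpr hη))
    linarith
  linarith [hmul, hfinal.le, hfinal.ge]
end
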